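/- Let p ≥ 5, k ≥ 1, and j ≡ 0 (mod p^{k-1}). If f_1 and f_2 are level-1 modular forms over Z/p^k of weights w and w + j(p-1) respectively with equal q-expansions mod p^k, then f_2 = E_{p-1}^j · f_1 as modular forms mod p^k; conversely multiplication by E_{p-1}^j preserves q-expansions mod p^k. -/

import Mathlib

open PowerSeries

lemma coeff_dvd_iff_C_dvd {p : ℕ} [Fact p.Prime] (r : ℤ_[p]) (f : PowerSeries ℤ_[p]) :
    (∀ n, r ∣ coeff n f) ↔ (C r) ∣ f := by
  constructor
  · intro h
    refine ⟨PowerSeries.mk fun n => (h n).choose, ?_⟩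
    ext n
    simp only [coeff_C_mul, coeff_mk]
    exact (h n).choose_spec
  · rintro ⟨g, rfl⟩ n
    simp only [coeff_C_mul]
    exact Dvd.intro _ rfl

/-!
STATEMENT 9 (Serre; Katz Prop. 4.4.2): Let `p ≥ 5` be prime, `k ≥ 1`, and
`j ≡ 0 (mod p^{k-1})`.  Modular forms of level 1 over `ℤ/pᵏ` are identified with their
q-expansions (the q-expansion map in a fixed weight is injective); we model the weight-`w`
forms as submodules `M w ⊆ ℤ_p⟦q⟧` closed under multiplication, with the Eisenstein
series `E = E_{p-1} ∈ M (p-1)` satisfying `E ≡ 1 (mod p)`.  If `f₁ ∈ M w` and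
`f₂ ∈ M (w + j(p-1))` have equal q-expansions mod `pᵏ`, then `f₂ = E_{p-1}^j · f₁` as
forms mod `pᵏ` (i.e. their q-expansions agree mod `pᵏ`); conversely, multiplication by
`E_{p-1}^j` preserves q-expansions mod `pᵏ`.
-/
theorem serre_congruence_eisenstein_multiplication
    (p : ℕ) [Fact p.Prime] (h5 : 5 ≤ p) (k j w : ℕ) (hk : 1 ≤ k)
    (hj : p ^ (k - 1) ∣ j)
    (M : ℕ → Submodule ℤ_[p] (PowerSeries ℤ_[p]))
    (hmul : ∀ a b f g, f ∈ M a → g ∈ M b → f * g ∈ M (a + b))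
    (E : PowerSeries ℤ_[p]) (hE : E ∈ M (p - 1))
    (hE1 : ∀ n, (p : ℤ_[p]) ∣ coeff n (E - 1))
    (f₁ f₂ : PowerSeries ℤ_[p]) (hf₁ : f₁ ∈ M w) (hf₂ : f₂ ∈ M (w + j * (p - 1)))
    (hcong : ∀ n, (p : ℤ_[p]) ^ k ∣ coeff n (f₂ - f₁)) :
    (∀ n, (p : ℤ_[p]) ^ k ∣ coeff n (f₂ - E ^ j * f₁)) ∧
    (∀ n, (p : ℤ_[p]) ^ k ∣ coeff n (E ^ j * f₁ - f₁)) := by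
  obtain ⟨m, rfl⟩ := hj
  -- work in the power series ring
  have hCp : ((p : ℕ) : PowerSeries ℤ_[p]) = C (p : ℤ_[p]) := by
    simp [map_natCast]
  have hEd : ((p : ℕ) : PowerSeries ℤ_[p]) ∣ E - 1 := by
    rw [hCp]
    exact (coeff_dvd_iff_C_dvd _ _).mp hE1
  have hpow : ((p : ℕ) : PowerSeries ℤ_[p]) ^ ((k - 1) + 1) ∣
      E ^ p ^ (k - 1) - 1 ^ p ^ (k - 1) := dvd_sub_pow_of_dvd_sub hEd (k - 1)
  rw [Nat.sub_add_cancel hk, one_pow] at hpow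
  have hEj : ((p : ℕ) : PowerSeries ℤ_[p]) ^ k ∣ E ^ (p ^ (k - 1) * m) - 1 := by
    have : E ^ p ^ (k - 1) - 1 ∣ (E ^ p ^ (k - 1)) ^ m - 1 ^ m := sub_dvd_pow_sub_pow _ _ m
    rw [one_pow, ← pow_mul] at this
    exact hpow.trans this
  have key : ∀ n, (p : ℤ_[p]) ^ k ∣ coeff n (E ^ (p ^ (k - 1) * m) * f₁ - f₁) := by
    intro n
    have : ((p : ℕ) : PowerSeries ℤ_[p]) ^ k ∣ (E ^ (p ^ (k - 1) * m) - 1) * f₁ :=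
      hEj.mul_right _
    rw [sub_mul, one_mul] at this
    have h3 : C ((p : ℤ_[p]) ^ k) ∣ E ^ (p ^ (k - 1) * m) * f₁ - f₁ := by
      rw [map_pow, ← hCp]; exact this
    exact (coeff_dvd_iff_C_dvd _ _).mpr h3 n
  refine ⟨fun n => ?_, key⟩
  have h1 := hcong n
  have h2 := key n
  have : coeff n (f₂ - E ^ (p ^ (k - 1) * m) * f₁)
      = coeff n (f₂ - f₁) - coeff n (E ^ (p ^ (k - 1) * m) * f₁ - f₁) := by
    rw [← map_sub]; ring_nf
  rw [this]
  exact dvd_sub h1 h2
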